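/- arXiv:2408.04493 — 2 statements merged into one kernel-verified Lean document; each statement's English description precedes it below -/
import Mathlib

section
/- Let A be a C*-subalgebra of M₂(ℂ) that is neither {0}, ℂ·I, nor M₂(ℂ). Then there exists a unit vector n ∈ ℝ³ such that A = D(n) := {aI + b(n·σ) : a,b ∈ ℂ}; in particular A is commutative and two-dimensional. -/
open Matrix Complex
open scoped Matrix

noncomputable section

def σ1 : Matrix (Fin 2) (Fin 2) ℂ := !![0, 1; 1, 0]
def σ2 : Matrix (Fin 2) (Fin 2) ℂ := !![0, -Complex.I; Complex.I, 0]
def σ3 : Matrix (Fin 2) (Fin 2) ℂ := !![1, 0; 0, -1]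

def pauliDot (n : Fin 3 → ℝ) : Matrix (Fin 2) (Fin 2) ℂ :=
  (n 0 : ℂ) • σ1 + (n 1 : ℂ) • σ2 + (n 2 : ℂ) • σ3

lemma l1 (E M : Matrix (Fin 2) (Fin 2) ℂ) (hdet : E.det = 0) :
    E * M * E = (M * E).trace • E := by
  have hd : E 0 0 * E 1 1 - E 0 1 * E 1 0 = 0 := by
    simpa [Matrix.det_fin_two] using hdet
  ext i j
  fin_cases i <;> fin_cases j <;>
    simp [Matrix.mul_apply, Fin.sum_univ_two, Matrix.trace_fin_two, Matrix.smul_apply]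
  · linear_combination (-(M 1 1)) * hd
  · linear_combination (M 0 1) * hd
  · linear_combination (M 1 0) * hd
  · linear_combination (-(M 0 0)) * hd

lemma mul_conjT_eq_zero {X : Matrix (Fin 2) (Fin 2) ℂ} (h : X * Xᴴ = 0) : X = 0 := by
  ext i j
  have hii := congrFun (congrFun h i) i
  simp only [Matrix.mul_apply, Fin.sum_univ_two, Matrix.conjTranspose_apply,
    Matrix.zero_apply, Complex.star_def] at hii
  rw [Complex.mul_conj, Complex.mul_conj] at hii
  have hsum : Complex.normSq (X i 0) + Complex.normSq (X i 1) = 0 := by exact_mod_cast hii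
  have h0 : Complex.normSq (X i 0) = 0 ∧ Complex.normSq (X i 1) = 0 := by
    constructor <;>
      nlinarith [Complex.normSq_nonneg (X i 0), Complex.normSq_nonneg (X i 1)]
  fin_cases j
  · simpa using Complex.normSq_eq_zero.mp h0.1
  · simpa using Complex.normSq_eq_zero.mp h0.2

lemma corner_top (S : Subalgebra ℂ (Matrix (Fin 2) (Fin 2) ℂ))
    (hstar : ∀ A ∈ S, Aᴴ ∈ S)
    (E F X : Matrix (Fin 2) (Fin 2) ℂ)
    (hE : E ∈ S) (hF : F ∈ S)
    (hEF : E + F = 1) (hEE : E * E = E) (hFF : F * F = F)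
    (hdetE : E.det = 0) (hdetF : F.det = 0)
    (hEH : Eᴴ = E) (hFH : Fᴴ = F)
    (hX : X ∈ S) (hXform : E * X * F = X) (hX0 : X ≠ 0) : S = ⊤ := by
  have hEX : E * X = X := by
    conv_lhs => rw [← hXform]
    rw [← mul_assoc, ← mul_assoc, hEE, hXform]
  have hXF : X * F = X := by
    conv_lhs => rw [← hXform]
    rw [mul_assoc, hFF, hXform]
  have hXH : Xᴴ = F * Xᴴ * E := by
    conv_lhs => rw [← hXform]
    simp [conjTranspose_mul, hEH, hFH, mul_assoc]
  have hFXH : F * Xᴴ = Xᴴ := by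
    conv_lhs => rw [hXH]
    rw [← mul_assoc, ← mul_assoc, hFF, ← hXH]
  have hXHE : Xᴴ * E = Xᴴ := by
    conv_lhs => rw [hXH]
    rw [mul_assoc, mul_assoc, hEE, ← mul_assoc, ← hXH]
  have hsand : E * (X * Xᴴ) * E = X * Xᴴ := by
    rw [← mul_assoc, hEX, mul_assoc, hXHE]
  set σ : ℂ := ((X * Xᴴ) * E).trace with hσdef
  have hσ : X * Xᴴ = σ • E := by
    rw [← hsand]; exact l1 E (X * Xᴴ) hdetE
  have hσ0 : σ ≠ 0 := by
    intro h
    rw [h, zero_smul] at hσ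
    exact hX0 (mul_conjT_eq_zero hσ)
  have hEeq : E = σ⁻¹ • (X * Xᴴ) := by
    rw [hσ, smul_smul, inv_mul_cancel₀ hσ0, one_smul]
  have hEMF : ∀ M : Matrix (Fin 2) (Fin 2) ℂ,
      E * M * F = (σ⁻¹ * (Xᴴ * (M * F)).trace) • X := by
    intro M
    have hc : Xᴴ * (M * F) = (Xᴴ * (M * F)).trace • F := by
      have h := l1 F (Xᴴ * M) hdetF
      calc Xᴴ * (M * F) = F * (Xᴴ * M) * F := by
            conv_lhs => rw [← hFXH]
            simp only [mul_assoc]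
        _ = ((Xᴴ * M) * F).trace • F := h
        _ = (Xᴴ * (M * F)).trace • F := by rw [mul_assoc]
    conv_lhs => rw [hEeq]
    simp only [smul_mul_assoc, mul_assoc]
    conv_lhs => rw [hc]
    rw [mul_smul_comm, hXF, smul_smul]
  rw [eq_top_iff]
  intro M _
  have hdec : E*M*E + E*M*F + F*M*E + F*M*F = M := by
    have h1 : (E+F)*M*(E+F) = M := by rw [hEF]; simp
    conv_rhs => rw [← h1]
    noncomm_ring
  rw [← hdec]
  have mem1 : E*M*E ∈ S := by rw [l1 E M hdetE]; exact S.smul_mem hE _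
  have mem4 : F*M*F ∈ S := by rw [l1 F M hdetF]; exact S.smul_mem hF _
  have mem2 : E*M*F ∈ S := by rw [hEMF M]; exact S.smul_mem hX _
  have mem3 : F*M*E ∈ S := by
    have h2 : F*M*E = (E*Mᴴ*F)ᴴ := by
      simp only [conjTranspose_mul, conjTranspose_conjTranspose, hEH, hFH, mul_assoc]
    rw [h2]
    apply hstar
    rw [hEMF Mᴴ]
    exact S.smul_mem hX _
  exact S.add_mem (S.add_mem (S.add_mem mem1 mem2) mem3) mem4

lemma pauliDot_eq (m : Fin 3 → ℝ) :
    pauliDot m = !![(m 2 : ℂ), (m 0 : ℂ) - (m 1 : ℂ) * Complex.I;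
                    (m 0 : ℂ) + (m 1 : ℂ) * Complex.I, -(m 2 : ℂ)] := by
  ext i j
  fin_cases i <;> fin_cases j <;>
    simp [pauliDot, σ1, σ2, σ3] <;> ring

section
variable {n : Fin 3 → ℝ}

lemma pauli_conjT : (pauliDot n)ᴴ = pauliDot n := by
  rw [pauliDot_eq]
  ext i j
  fin_cases i <;> fin_cases j <;>
    simp [Matrix.conjTranspose_apply, map_add, map_sub, _root_.map_mul,
      Complex.conj_ofReal, Complex.conj_I] <;> ring


lemma pauli_trace : (pauliDot n).trace = 0 := by
  rw [pauliDot_eq]; simp [Matrix.trace_fin_two]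


variable (hn : n 0 ^ 2 + n 1 ^ 2 + n 2 ^ 2 = 1)
include hn

lemma pauli_sq : pauliDot n * pauliDot n = 1 := by
  have hnc : ((n 0 : ℂ))^2 + ((n 1 : ℂ))^2 + ((n 2 : ℂ))^2 = 1 := by exact_mod_cast hn
  rw [pauliDot_eq]
  ext i j
  fin_cases i <;> fin_cases j <;>
    simp [Matrix.mul_apply, Fin.sum_univ_two, Matrix.one_apply]
  · linear_combination hnc - (n 1 : ℂ)^2 * Complex.I_sq
  · ring
  · ring
  · linear_combination hnc - (n 1 : ℂ)^2 * Complex.I_sq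

lemma pauli_det_one_add : (1 + pauliDot n).det = 0 := by
  have hnc : ((n 0 : ℂ))^2 + ((n 1 : ℂ))^2 + ((n 2 : ℂ))^2 = 1 := by exact_mod_cast hn
  rw [pauliDot_eq]
  rw [Matrix.det_fin_two]
  simp [Matrix.one_apply]
  linear_combination -hnc + (n 1 : ℂ)^2 * Complex.I_sq

lemma pauli_det_one_sub : (1 - pauliDot n).det = 0 := by
  have hnc : ((n 0 : ℂ))^2 + ((n 1 : ℂ))^2 + ((n 2 : ℂ))^2 = 1 := by exact_mod_cast hn
  rw [pauliDot_eq]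
  rw [Matrix.det_fin_two]
  simp [Matrix.one_apply]
  linear_combination -hnc + (n 1 : ℂ)^2 * Complex.I_sq

end

lemma span_case (S : Subalgebra ℂ (Matrix (Fin 2) (Fin 2) ℂ))
    (hstar : ∀ A ∈ S, Aᴴ ∈ S) (htop : S ≠ ⊤)
    (P : Matrix (Fin 2) (Fin 2) ℂ) (hPS : P ∈ S)
    (hP2 : P * P = 1) (hPH : Pᴴ = P)
    (hdet1 : (1 + P).det = 0) (hdet2 : (1 - P).det = 0) :
    ∀ B ∈ S, ∃ a b : ℂ, B = a • 1 + b • P := by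
  set E : Matrix (Fin 2) (Fin 2) ℂ := (2:ℂ)⁻¹ • (1 + P) with hEdef
  set F : Matrix (Fin 2) (Fin 2) ℂ := (2:ℂ)⁻¹ • (1 - P) with hFdef
  have hE : E ∈ S := S.smul_mem (S.add_mem S.one_mem hPS) _
  have hF : F ∈ S := S.smul_mem (S.sub_mem S.one_mem hPS) _
  have hEF : E + F = 1 := by
    rw [hEdef, hFdef, ← smul_add]
    have h : (1 + P) + (1 - P) = (2:ℂ) • (1 : Matrix (Fin 2) (Fin 2) ℂ) := by
      rw [two_smul]; abel
    rw [h, smul_smul]; norm_num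
  have hexpE : (1 + P) * (1 + P) = (2:ℂ) • (1 + P) := by
    rw [mul_add, mul_one, add_mul, one_mul, hP2, two_smul]; abel
  have hexpF : (1 - P) * (1 - P) = (2:ℂ) • (1 - P) := by
    rw [sub_mul, one_mul, mul_sub, mul_one, hP2, two_smul]; abel
  have hEE : E * E = E := by
    rw [hEdef, smul_mul_assoc, mul_smul_comm, hexpE, smul_smul, smul_smul]
    norm_num
  have hFF : F * F = F := by
    rw [hFdef, smul_mul_assoc, mul_smul_comm, hexpF, smul_smul, smul_smul]
    norm_num
  have hdetE : E.det = 0 := by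
    rw [hEdef, Matrix.det_smul, hdet1, mul_zero]
  have hdetF : F.det = 0 := by
    rw [hFdef, Matrix.det_smul, hdet2, mul_zero]
  have hEH : Eᴴ = E := by
    rw [hEdef, Matrix.conjTranspose_smul, Matrix.conjTranspose_add,
      Matrix.conjTranspose_one, hPH]
    norm_num
  have hFH : Fᴴ = F := by
    rw [hFdef, Matrix.conjTranspose_smul, Matrix.conjTranspose_sub,
      Matrix.conjTranspose_one, hPH]
    norm_num
  intro B hB
  by_cases hX0 : E * B * F = 0
  · by_cases hY0 : F * B * E = 0
    · -- B is "diagonal": B = tr(BE)•E + tr(BF)•F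
      have h1 : (E+F)*B*(E+F) = B := by rw [hEF]; simp
      have hdec : E*B*E + E*B*F + F*B*E + F*B*F = B := by
        conv_rhs => rw [← h1]
        noncomm_ring
      rw [hX0, hY0] at hdec
      have hBeq : B = (B*E).trace • E + (B*F).trace • F := by
        conv_lhs => rw [← hdec]
        rw [l1 E B hdetE, l1 F B hdetF]
        abel
      set t1 := (B*E).trace with ht1
      set t2 := (B*F).trace with ht2
      refine ⟨(t1 + t2) / 2, (t1 - t2) / 2, ?_⟩
      rw [hBeq, hEdef, hFdef]
      match_scalars <;> ring
    · exfalso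
      apply htop
      refine corner_top S hstar F E (F*B*E) hF hE ?_ hFF hEE hdetF hdetE hFH hEH
        (S.mul_mem (S.mul_mem hF hB) hE) ?_ hY0
      · rw [add_comm]; exact hEF
      · rw [← mul_assoc, ← mul_assoc, hFF, mul_assoc, mul_assoc, hEE, ← mul_assoc]
  · exfalso
    apply htop
    refine corner_top S hstar E F (E*B*F) hE hF hEF hEE hFF hdetE hdetF hEH hFH
      (S.mul_mem (S.mul_mem hE hB) hF) ?_ hX0
    rw [← mul_assoc, ← mul_assoc, hEE, mul_assoc, mul_assoc, hFF, ← mul_assoc]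

theorem proper_starSubalgebra_of_M2_eq_Dn
    (S : Subalgebra ℂ (Matrix (Fin 2) (Fin 2) ℂ))
    (hstar : ∀ A ∈ S, Aᴴ ∈ S)
    (hbot : S ≠ ⊥) (htop : S ≠ ⊤) :
    ∃ n : Fin 3 → ℝ, n 0 ^ 2 + n 1 ^ 2 + n 2 ^ 2 = 1 ∧
      (S : Set (Matrix (Fin 2) (Fin 2) ℂ)) =
        {A | ∃ a b : ℂ, A = a • (1 : Matrix (Fin 2) (Fin 2) ℂ) + b • pauliDot n} ∧
      (∀ A ∈ S, ∀ B ∈ S, A * B = B * A) ∧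
      Module.finrank ℂ S = 2 := by
  classical
  -- Step 1: a non-scalar element of S
  have hns : ∃ A ∈ S, ∀ c : ℂ, A ≠ c • (1 : Matrix (Fin 2) (Fin 2) ℂ) := by
    by_contra h
    push_neg at h
    apply hbot
    refine le_antisymm (fun x hx => ?_) bot_le
    obtain ⟨c, rfl⟩ := h x hx
    rw [Algebra.mem_bot]
    exact ⟨c, (Algebra.algebraMap_eq_smul_one c)⟩
  obtain ⟨A, hAS, hAns⟩ := hns
  -- Step 2: a non-scalar self-adjoint element of S
  have hH : ∃ H ∈ S, Hᴴ = H ∧ ∀ c : ℂ, H ≠ c • 1 := by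
    by_cases h1 : ∀ c : ℂ, A + Aᴴ ≠ c • 1
    · refine ⟨A + Aᴴ, S.add_mem hAS (hstar A hAS), ?_, h1⟩
      rw [Matrix.conjTranspose_add, Matrix.conjTranspose_conjTranspose, add_comm]
    · by_cases h2 : ∀ c : ℂ, Complex.I • (A - Aᴴ) ≠ c • 1
      · refine ⟨Complex.I • (A - Aᴴ),
          S.smul_mem (S.sub_mem hAS (hstar A hAS)) _, ?_, h2⟩
        rw [Matrix.conjTranspose_smul, Matrix.conjTranspose_sub,
          Matrix.conjTranspose_conjTranspose]
        simp only [Complex.star_def, Complex.conj_I]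
        module
      · exfalso
        push_neg at h1 h2
        obtain ⟨c, hc⟩ := h1
        obtain ⟨d, hd⟩ := h2
        apply hAns ((c - Complex.I * d) / 2)
        have h2A : (2:ℂ) • A = (c - Complex.I * d) • 1 := by
          have key : (2:ℂ) • A = (A + Aᴴ) + (-Complex.I) • (Complex.I • (A - Aᴴ)) := by
            rw [smul_smul]
            simp only [neg_mul, Complex.I_mul_I, neg_neg, one_smul, two_smul]
            abel
          rw [hc, hd, smul_smul] at key
          rw [key, ← add_smul]
          ring_nf
        calc A = (2:ℂ)⁻¹ • ((2:ℂ) • A) := by rw [smul_smul]; norm_num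
          _ = ((c - Complex.I * d) / 2) • 1 := by rw [h2A, smul_smul]; ring_nf
  obtain ⟨H, hHS, hHH, hHns⟩ := hH
  -- Step 3: real coordinates of H
  have e00 : (starRingEnd ℂ) (H 0 0) = H 0 0 := by
    conv_rhs => rw [← hHH]
    rfl
  have e11 : (starRingEnd ℂ) (H 1 1) = H 1 1 := by
    conv_rhs => rw [← hHH]
    rfl
  have e10 : (starRingEnd ℂ) (H 0 1) = H 1 0 := by
    conv_rhs => rw [← hHH]
    rfl
  have him00 : (H 0 0).im = 0 := by
    have := Complex.conj_eq_iff_im.mp e00; exact this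
  have him11 : (H 1 1).im = 0 := by
    have := Complex.conj_eq_iff_im.mp e11; exact this
  set v : Fin 3 → ℝ := ![(H 0 1).re, -(H 0 1).im, ((H 0 0).re - (H 1 1).re)/2] with hvdef
  set cH : ℝ := ((H 0 0).re + (H 1 1).re)/2 with hcHdef
  have hv0 : v 0 = (H 0 1).re := rfl
  have hv1 : v 1 = -(H 0 1).im := rfl
  have hv2 : v 2 = ((H 0 0).re - (H 1 1).re)/2 := rfl
  have hHdec : H = (cH:ℂ) • 1 + pauliDot v := by
    rw [pauliDot_eq]
    ext i j
    fin_cases i <;> fin_cases j <;>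
      simp [Matrix.one_apply, hv0, hv1, hv2, Matrix.smul_apply, Matrix.add_apply] <;>
      apply Complex.ext <;>
      simp [him00, him11] <;>
      push_cast
    · rw [hcHdef]; ring
    · rw [← e10]; simp
    · rw [← e10]; simp
    · rw [hcHdef]; ring
  have hv : pauliDot v = H - (cH:ℂ) • 1 := by rw [hHdec]; abel
  have hPvS : pauliDot v ∈ S := by
    rw [hv]; exact S.sub_mem hHS (S.smul_mem S.one_mem _)
  set sq : ℝ := v 0 ^ 2 + v 1 ^ 2 + v 2 ^ 2 with hsqdef
  have hs0 : sq ≠ 0 := by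
    intro h0
    have hz0 : v 0 = 0 := by nlinarith [sq_nonneg (v 0), sq_nonneg (v 1), sq_nonneg (v 2)]
    have hz1 : v 1 = 0 := by nlinarith [sq_nonneg (v 0), sq_nonneg (v 1), sq_nonneg (v 2)]
    have hz2 : v 2 = 0 := by nlinarith [sq_nonneg (v 0), sq_nonneg (v 1), sq_nonneg (v 2)]
    apply hHns cH
    rw [hHdec]
    have hzero : pauliDot v = 0 := by
      rw [pauliDot_eq, hz0, hz1, hz2]
      ext i j
      fin_cases i <;> fin_cases j <;> simp
    rw [hzero, add_zero]
  have hspos : 0 < sq := lt_of_le_of_ne (by positivity) (Ne.symm hs0)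
  set r : ℝ := Real.sqrt sq with hrdef
  have hrpos : 0 < r := Real.sqrt_pos.mpr hspos
  have hrne : r ≠ 0 := ne_of_gt hrpos
  have hr2 : r ^ 2 = sq := Real.sq_sqrt hspos.le
  set n : Fin 3 → ℝ := ![v 0 / r, v 1 / r, v 2 / r] with hndef
  have hn0 : n 0 = v 0 / r := rfl
  have hn1 : n 1 = v 1 / r := rfl
  have hn2 : n 2 = v 2 / r := rfl
  have hn : n 0 ^ 2 + n 1 ^ 2 + n 2 ^ 2 = 1 := by
    have hsum : v 0 ^ 2 + v 1 ^ 2 + v 2 ^ 2 = r ^ 2 := by rw [hr2]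
    rw [hn0, hn1, hn2]
    field_simp
    linarith [hsum]
  set P := pauliDot n with hPdef
  have hPscale : P = ((r:ℂ))⁻¹ • pauliDot v := by
    rw [hPdef, pauliDot_eq, pauliDot_eq]
    ext i j
    fin_cases i <;> fin_cases j <;>
      simp [hn0, hn1, hn2, Matrix.smul_apply] <;> push_cast <;> ring
  have hPS : P ∈ S := by rw [hPscale]; exact S.smul_mem hPvS _
  have hP2 : P * P = 1 := pauli_sq hn
  have hPH : Pᴴ = P := pauli_conjT (n := n)
  have hmain : ∀ B ∈ S, ∃ a b : ℂ, B = a • 1 + b • P :=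
    span_case S hstar htop P hPS hP2 hPH (pauli_det_one_add hn) (pauli_det_one_sub hn)
  refine ⟨n, hn, ?_, ?_, ?_⟩
  · ext B
    simp only [SetLike.mem_coe, Set.mem_setOf_eq]
    constructor
    · exact fun hB => hmain B hB
    · rintro ⟨a, b, rfl⟩
      exact S.add_mem (S.smul_mem S.one_mem a) (S.smul_mem hPS b)
  · intro A1 hA1 B1 hB1
    obtain ⟨a, b, rfl⟩ := hmain A1 hA1
    obtain ⟨c, d, rfl⟩ := hmain B1 hB1
    simp only [add_mul, mul_add, smul_mul_assoc, mul_smul_comm, one_mul, mul_one, smul_smul]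
    module
  · have hPne : P ≠ 0 := by
      intro h
      rw [h, mul_zero] at hP2
      exact one_ne_zero hP2.symm
    have hli : LinearIndependent ℂ ![(1 : Matrix (Fin 2) (Fin 2) ℂ), P] := by
      rw [LinearIndependent.pair_iff]
      intro x y hxy
      have htr := congrArg Matrix.trace hxy
      rw [Matrix.trace_add, Matrix.trace_smul, Matrix.trace_smul, Matrix.trace_one,
        hPdef, pauli_trace] at htr
      simp only [smul_eq_mul, mul_zero, add_zero, Matrix.trace_zero] at htr
      have hx : x = 0 := by
        have h2 : x * 2 = 0 := by simpa using htr
        rcases mul_eq_zero.mp h2 with h | h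
        · exact h
        · norm_num at h
      subst hx
      rw [zero_smul, zero_add] at hxy
      rcases smul_eq_zero.mp hxy with hy | hP0
      · exact ⟨rfl, hy⟩
      · exact absurd hP0 hPne
    have hsub : Subalgebra.toSubmodule S
        = Submodule.span ℂ (Set.range ![(1 : Matrix (Fin 2) (Fin 2) ℂ), P]) := by
      apply le_antisymm
      · intro x hx
        obtain ⟨a, b, rfl⟩ := hmain x hx
        exact Submodule.add_mem _
          (Submodule.smul_mem _ a (Submodule.subset_span ⟨0, rfl⟩))
          (Submodule.smul_mem _ b (Submodule.subset_span ⟨1, rfl⟩))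
      · rw [Submodule.span_le]
        rintro x ⟨i, rfl⟩
        fin_cases i
        · exact S.one_mem
        · exact hPS
    have heq : Module.finrank ℂ S = Module.finrank ℂ (Subalgebra.toSubmodule S) := rfl
    rw [heq, hsub, finrank_span_eq_card hli]
    simp
end
end

section
/- Let U_{ab} := exp((i/2)[(a+b)φ](I − σ³)) for a, b ∈ {0,1} and φ ∈ ℝ. Then for all a, b, a', b' ∈ {0,1} and all O, O' ∈ M₂(ℂ), the operators Σ_{b} (U_{ab}† O U_{ab}) ⊗ |b⟩⟨b| and Σ_{a'} |a'⟩⟨a'| ⊗ (U_{a'b'}† O' U_{a'b'}) commute in M₂(ℂ) ⊗ M₂(ℂ). -/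
open Matrix Complex
open scoped Matrix Kronecker

noncomputable section

/-- `U_{ab} = exp((i/2)(a+b)φ (I − σ³)) = diag(1, e^{i(a+b)φ})`. -/
def Uab (a b : Fin 2) (φ : ℝ) : Matrix (Fin 2) (Fin 2) ℂ :=
  NormedSpace.exp ((Complex.I / 2 * (((a : ℕ) : ℂ) + ((b : ℕ) : ℂ)) * (φ : ℂ)) •
    ((1 : Matrix (Fin 2) (Fin 2) ℂ) - σ3))

/-- the diagonal rank-one projectors `|b⟩⟨b|`. -/
def proj (b : Fin 2) : Matrix (Fin 2) (Fin 2) ℂ :=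
  fun i j => if i = b ∧ j = b then 1 else 0

lemma Uab_eq (a b : Fin 2) (φ : ℝ) :
    Uab a b φ = Matrix.diagonal ![1, Complex.exp (Complex.I * (((a:ℕ):ℂ)+((b:ℕ):ℂ)) * φ)] := by
  have h : (1 : Matrix (Fin 2) (Fin 2) ℂ) - σ3 = Matrix.diagonal ![0, 2] := by
    ext i j; fin_cases i <;> fin_cases j <;> simp [σ3, Matrix.one_apply] <;> norm_num
  rw [Uab, h, ← Matrix.diagonal_smul, Matrix.exp_diagonal]
  ext i j
  fin_cases i <;> fin_cases j <;>
    simp [Matrix.diagonal, Pi.exp_def, ← Complex.exp_eq_exp_ℂ]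
  congr 1; ring

lemma conj_diag_entry (d : Fin 2 → ℂ) (M : Matrix (Fin 2) (Fin 2) ℂ) (i j : Fin 2) :
    ((Matrix.diagonal d)ᴴ * M * Matrix.diagonal d) i j
      = (starRingEnd ℂ) (d i) * M i j * d j := by
  fin_cases i <;> fin_cases j <;>
    simp [Matrix.mul_apply, Matrix.diagonal_apply, Fin.sum_univ_two,
      Matrix.conjTranspose_apply]

set_option maxHeartbeats 1600000 in
theorem controlled_phase_local_rule_commutes (φ : ℝ)
    (a b' : Fin 2) (O O' : Matrix (Fin 2) (Fin 2) ℂ) :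
    Commute
      (∑ b : Fin 2, ((Uab a b φ)ᴴ * O * Uab a b φ) ⊗ₖ proj b)
      (∑ a' : Fin 2, proj a' ⊗ₖ ((Uab a' b' φ)ᴴ * O' * Uab a' b' φ)) := by
  simp only [Uab_eq]
  rw [Commute, SemiconjBy]
  ext ⟨i, k⟩ ⟨j, l⟩
  simp only [Matrix.mul_apply, Fintype.sum_prod_type, Fin.sum_univ_two,
    Matrix.sum_apply, Matrix.kroneckerMap_apply, conj_diag_entry, proj]
  fin_cases i <;> fin_cases k <;> fin_cases j <;> fin_cases l <;>
    simp [proj, ← Complex.exp_conj, _root_.map_mul, _root_.map_add, Complex.conj_I,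
      Complex.conj_ofReal, ← Complex.exp_add] <;>
    ring_nf <;>
    simp [Complex.exp_add, Complex.exp_sub, Complex.exp_neg] <;> ring_nf <;>
    field_simp <;> simp
end
end
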